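/- If α = β for equivalent irrational numbers, the Diophantine constant is preserved: for irrational α and β with α ∼ β one has 𝔨(α) = 𝔨(β). -/

import Mathlib

open Filter

/-- The tails `αₙ = [aₙ; aₙ₊₁, …]` of the continued fraction of `α`. -/
noncomputable def cfTail (α : ℝ) : ℕ → ℝ
  | 0 => α
  | n + 1 => (Int.fract (cfTail α n))⁻¹

/-- The partial quotients `aₙ` of the continued fraction of `α`. -/
noncomputable def cfDigit (α : ℝ) (n : ℕ) : ℤ := ⌊cfTail α n⌋

/-- Value `[a; b, c, …]` of a finite continued fraction given by a list. -/
noncomputable def finCF : List ℤ → ℝ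
  | [] => 0
  | a :: l => (a : ℝ) + (finCF l)⁻¹

/-- `α*ₙ = [0; aₙ, aₙ₋₁, …, a₁]`. -/
noncomputable def cfStar (α : ℝ) (n : ℕ) : ℝ :=
  (finCF (((List.range' 1 n).reverse).map (cfDigit α)))⁻¹

/-- Numerators `pₙ` of the convergents of `α`. -/
noncomputable def cfNum (α : ℝ) : ℕ → ℤ
  | 0 => cfDigit α 0
  | 1 => cfDigit α 1 * cfDigit α 0 + 1
  | n + 2 => cfDigit α (n + 2) * cfNum α (n + 1) + cfNum α n

/-- Denominators `qₙ` of the convergents of `α`. -/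
noncomputable def cfDen (α : ℝ) : ℕ → ℤ
  | 0 => 1
  | 1 => cfDigit α 1
  | n + 2 => cfDigit α (n + 2) * cfDen α (n + 1) + cfDen α n

/-- The irrationality measure function `ψ_α^[2]` for "second best" approximations. -/
noncomputable def psi2 (α : ℝ) (t : ℝ) : ℝ :=
  sInf { x : ℝ | ∃ p q : ℤ, 1 ≤ q ∧ (q : ℝ) ≤ t ∧
    (∀ n : ℕ, (p, q) ≠ (cfNum α n, cfDen α n)) ∧ x = |(q : ℝ) * α - (p : ℝ)| }

/-- The Diophantine constant `𝔨(α) = liminf_{t → ∞} t · ψ_α^[2](t)`. -/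
noncomputable def kConst (α : ℝ) : ℝ := liminf (fun t : ℝ => t * psi2 α t) atTop

/-- Two numbers are equivalent if the tails of their continued fraction expansions
coincide: `a_{n+k} = b_{m+k}` for all `k ≥ 1`, for some positive integers `m`, `n`. -/
def CFEquiv (α β : ℝ) : Prop :=
  ∃ n m : ℕ, 0 < n ∧ 0 < m ∧ ∀ k : ℕ, 0 < k → cfDigit α (n + k) = cfDigit β (m + k)

/-- The spectrum `𝕃₂` of values of `𝔨`. -/
def L2 : Set ℝ := { l : ℝ | ∃ α : ℝ, Irrational α ∧ l = kConst α }

/-- `κ¹ₙ(α) = (1 + α*ₙ₋₁)(αₙ − 1)/(αₙ + α*ₙ₋₁)`. -/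
noncomputable def kappa1 (α : ℝ) (n : ℕ) : ℝ :=
  (1 + cfStar α (n - 1)) * (cfTail α n - 1) / (cfTail α n + cfStar α (n - 1))

/-- `κ²ₙ(α) = (1 − α*ₙ)(αₙ₊₁ + 1)/(αₙ₊₁ + α*ₙ)`. -/
noncomputable def kappa2 (α : ℝ) (n : ℕ) : ℝ :=
  (1 - cfStar α n) * (cfTail α (n + 1) + 1) / (cfTail α (n + 1) + cfStar α n)

/-- `κ⁴ₙ(α) = 4/(αₙ + α*ₙ₋₁)`. -/
noncomputable def kappa4 (α : ℝ) (n : ℕ) : ℝ :=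
  4 / (cfTail α n + cfStar α (n - 1))

section Basics

variable {α : ℝ} (hα : Irrational α)

lemma irrational_cfTail (hα : Irrational α) (n : ℕ) : Irrational (cfTail α n) := by
  induction n with
  | zero => exact hα
  | succ n ih =>
    show Irrational (Int.fract (cfTail α n))⁻¹
    have h1 : Irrational (Int.fract (cfTail α n)) := by
      rw [Int.fract]
      exact ih.sub_intCast _
    exact h1.inv

lemma one_lt_cfTail_succ (hα : Irrational α) (n : ℕ) : 1 < cfTail α (n + 1) := by
  show 1 < (Int.fract (cfTail α n))⁻¹
  have h0 : Int.fract (cfTail α n) ≠ 0 := by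
    intro h
    have := (irrational_cfTail hα n).sub_intCast ⌊cfTail α n⌋
    rw [Int.fract] at h
    rw [h] at this
    exact this ⟨0, by simp⟩
  have h1 : 0 < Int.fract (cfTail α n) := lt_of_le_of_ne (Int.fract_nonneg _) (Ne.symm h0)
  have h2 : Int.fract (cfTail α n) < 1 := Int.fract_lt_one _
  exact (one_lt_inv₀ h1).mpr h2

lemma cfTail_succ_pos (hα : Irrational α) (n : ℕ) : 0 < cfTail α (n + 1) :=
  lt_trans one_pos (one_lt_cfTail_succ hα n)

lemma cfTail_succ_ne_zero (hα : Irrational α) (n : ℕ) : cfTail α (n + 1) ≠ 0 :=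
  ne_of_gt (cfTail_succ_pos hα n)

lemma one_le_cfDigit_succ (hα : Irrational α) (n : ℕ) : 1 ≤ cfDigit α (n + 1) := by
  have := one_lt_cfTail_succ hα n
  rw [cfDigit]
  exact Int.le_floor.mpr (le_of_lt (by exact_mod_cast this))

lemma cfTail_rec (hα : Irrational α) (n : ℕ) :
    cfTail α n = (cfDigit α n : ℝ) + (cfTail α (n + 1))⁻¹ := by
  have h0 : Int.fract (cfTail α n) ≠ 0 := by
    intro h
    have := (irrational_cfTail hα n).sub_intCast ⌊cfTail α n⌋
    rw [Int.fract] at h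
    rw [h] at this
    exact this ⟨0, by simp⟩
  have : cfTail α (n + 1) = (Int.fract (cfTail α n))⁻¹ := rfl
  rw [this, inv_inv, cfDigit, Int.fract]
  ring

lemma cfTail_shift (j k : ℕ) : cfTail (cfTail α j) k = cfTail α (j + k) := by
  induction k with
  | zero => rfl
  | succ k ih =>
    show (Int.fract (cfTail (cfTail α j) k))⁻¹ = cfTail α (j + (k+1))
    rw [ih]
    rfl

lemma cfDigit_shift (j k : ℕ) : cfDigit (cfTail α j) k = cfDigit α (j + k) := by
  rw [cfDigit, cfTail_shift, cfDigit]

lemma one_le_cfDen (n : ℕ) (hα : Irrational α) : 1 ≤ cfDen α n := by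
  induction n using Nat.twoStepInduction with
  | zero => simp [cfDen]
  | one => simpa [cfDen] using one_le_cfDigit_succ hα 0
  | more n ih1 ih2 =>
    have hd := one_le_cfDigit_succ hα (n + 1)
    show 1 ≤ cfDigit α (n + 2) * cfDen α (n + 1) + cfDen α n
    nlinarith

lemma le_cfDen (n : ℕ) (hα : Irrational α) : (n : ℤ) ≤ cfDen α n := by
  induction n using Nat.twoStepInduction with
  | zero => simp [cfDen]
  | one => simpa [cfDen] using one_le_cfDigit_succ hα 0
  | more n ih1 ih2 =>
    have hd := one_le_cfDigit_succ hα (n + 1)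
    have h1 := one_le_cfDen n hα
    push_cast at ih2
    show ((n:ℤ) + 2) ≤ cfDigit α (n + 2) * cfDen α (n + 1) + cfDen α n
    nlinarith

lemma cfDen_mono (n : ℕ) (hα : Irrational α) : cfDen α n ≤ cfDen α (n + 1) := by
  cases n with
  | zero => simpa [cfDen] using one_le_cfDigit_succ hα 0
  | succ n =>
    have hd := one_le_cfDigit_succ hα (n + 1)
    have h1 := one_le_cfDen n hα
    have h2 := one_le_cfDen (n+1) hα
    show cfDen α (n+1) ≤ cfDigit α (n + 2) * cfDen α (n + 1) + cfDen α n
    nlinarith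

end Basics
section Identities

variable {α : ℝ}

lemma main_id (hα : Irrational α) (k : ℕ) :
    α * ((cfDen α (k+1) : ℝ) * cfTail α (k+2) + (cfDen α k : ℝ)) =
      (cfNum α (k+1) : ℝ) * cfTail α (k+2) + (cfNum α k : ℝ) := by
  have step : ∀ j : ℕ, (cfTail α j - (cfDigit α j : ℝ)) * cfTail α (j+1) = 1 := by
    intro j
    have n1 : cfTail α (j+1) ≠ 0 := cfTail_succ_ne_zero hα j
    have h1 : cfTail α j - (cfDigit α j : ℝ) = (cfTail α (j+1))⁻¹ := by
      have := cfTail_rec hα j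
      linarith
    rw [h1]
    field_simp
  induction k with
  | zero =>
    have e1 : (α - (cfDigit α 0 : ℝ)) * cfTail α 1 = 1 := step 0
    have e2 : (cfTail α 1 - (cfDigit α 1 : ℝ)) * cfTail α 2 = 1 := step 1
    simp only [cfNum, cfDen]
    push_cast
    linear_combination (cfTail α 2) * e1 - (α - (cfDigit α 0 : ℝ)) * e2
  | succ k ih =>
    have e : (cfTail α (k+2) - (cfDigit α (k+2) : ℝ)) * cfTail α (k+3) = 1 := step (k+2)
    have hp : (cfNum α (k+2) : ℝ) = (cfDigit α (k+2) : ℝ) * (cfNum α (k+1) : ℝ) + (cfNum α k : ℝ) := by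
      rw [show cfNum α (k+2) = cfDigit α (k + 2) * cfNum α (k + 1) + cfNum α k from rfl]; push_cast; ring
    have hq : (cfDen α (k+2) : ℝ) = (cfDigit α (k+2) : ℝ) * (cfDen α (k+1) : ℝ) + (cfDen α k : ℝ) := by
      rw [show cfDen α (k+2) = cfDigit α (k + 2) * cfDen α (k + 1) + cfDen α k from rfl]; push_cast; ring
    rw [hp, hq]
    linear_combination (cfTail α (k+3)) * ih - (α * (cfDen α (k+1):ℝ) - (cfNum α (k+1):ℝ)) * e

lemma det_id (k : ℕ) :
    cfNum α (k+1) * cfDen α k - cfNum α k * cfDen α (k+1) = (-1)^k := by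
  induction k with
  | zero => simp [cfNum, cfDen]; ring
  | succ k ih =>
    have hp : cfNum α (k+2) = cfDigit α (k + 2) * cfNum α (k + 1) + cfNum α k := rfl
    have hq : cfDen α (k+2) = cfDigit α (k + 2) * cfDen α (k + 1) + cfDen α k := rfl
    rw [hp, hq, pow_succ]
    linear_combination (-1 : ℤ) * ih

lemma eta_id (hα : Irrational α) (k : ℕ) :
    ((cfDen α k : ℝ) * α - (cfNum α k : ℝ)) *
      ((cfDen α (k+1) : ℝ) * cfTail α (k+2) + (cfDen α k : ℝ)) =
      (-1)^k * cfTail α (k+2) := by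
  have h1 := main_id hα k
  have h2 := det_id (α := α) k
  have h2' : ((cfNum α (k+1) : ℝ) * (cfDen α k : ℝ) - (cfNum α k : ℝ) * (cfDen α (k+1) : ℝ)) = (-1)^k := by
    exact_mod_cast congrArg (Int.cast : ℤ → ℝ) h2
  linear_combination (cfDen α k : ℝ) * h1 + cfTail α (k+2) * h2'

lemma eta_abs_le (hα : Irrational α) (k : ℕ) :
    |(cfDen α k : ℝ) * α - (cfNum α k : ℝ)| ≤ ((cfDen α (k+1) : ℝ))⁻¹ := by
  have h := eta_id hα k
  have ht : (1:ℝ) < cfTail α (k+2) := one_lt_cfTail_succ hα (k+1)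
  have hq1 : (1:ℝ) ≤ (cfDen α (k+1) : ℝ) := by exact_mod_cast one_le_cfDen (k+1) hα
  have hq0 : (1:ℝ) ≤ (cfDen α k : ℝ) := by exact_mod_cast one_le_cfDen k hα
  have hD : (0:ℝ) < (cfDen α (k+1) : ℝ) * cfTail α (k+2) + (cfDen α k : ℝ) := by nlinarith
  have habs : |(cfDen α k : ℝ) * α - (cfNum α k : ℝ)| =
      cfTail α (k+2) / ((cfDen α (k+1) : ℝ) * cfTail α (k+2) + (cfDen α k : ℝ)) := by
    rw [eq_div_iff (ne_of_gt hD)]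
    calc |(cfDen α k : ℝ) * α - (cfNum α k : ℝ)| *
        ((cfDen α (k+1) : ℝ) * cfTail α (k+2) + (cfDen α k : ℝ))
        = |((cfDen α k : ℝ) * α - (cfNum α k : ℝ)) *
            ((cfDen α (k+1) : ℝ) * cfTail α (k+2) + (cfDen α k : ℝ))| := by
          rw [abs_mul, abs_of_pos hD]
      _ = |(-1:ℝ)^k * cfTail α (k+2)| := by rw [h]
      _ = cfTail α (k+2) := by
          rw [abs_mul, abs_pow, abs_neg, abs_one, one_pow, one_mul,
            abs_of_pos (lt_trans one_pos ht)]
  rw [habs, div_le_iff₀ hD]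
  have : (cfDen α (k+1) : ℝ)⁻¹ * ((cfDen α (k+1) : ℝ) * cfTail α (k+2)) = cfTail α (k+2) := by
    field_simp
  nlinarith [inv_pos.mpr (lt_of_lt_of_le one_pos hq1 : (0:ℝ) < (cfDen α (k+1):ℝ)),
    mul_le_mul_of_nonneg_left hq0 (le_of_lt (inv_pos.mpr (lt_of_lt_of_le one_pos hq1 : (0:ℝ) < (cfDen α (k+1):ℝ))))]

lemma eta_pos (hα : Irrational α) (k : ℕ) :
    0 < |(cfDen α k : ℝ) * α - (cfNum α k : ℝ)| := by
  rw [abs_pos]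
  intro h
  have hq : (cfDen α k : ℝ) ≠ 0 := by
    have := one_le_cfDen k hα
    exact_mod_cast ne_of_gt (lt_of_lt_of_le zero_lt_one (by exact_mod_cast this))
  apply hα
  exact ⟨(cfNum α k : ℚ) / (cfDen α k : ℚ), by
    push_cast
    field_simp
    linarith [h]⟩

end Identities
section Unique

lemma eta_abs_le' {α : ℝ} (hα : Irrational α) (k : ℕ) :
    |(cfDen α k : ℝ) * α - (cfNum α k : ℝ)| ≤ 1 / (k + 1 : ℝ) := by
  refine le_trans (eta_abs_le hα k) ?_
  rw [one_div]
  have h1 : ((k:ℝ) + 1) ≤ (cfDen α (k+1) : ℝ) := by exact_mod_cast le_cfDen (k+1) hα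
  exact inv_anti₀ (by positivity) h1

lemma cf_unique {x y : ℝ} (hx : Irrational x) (hy : Irrational y)
    (h : ∀ k, cfDigit x k = cfDigit y k) : x = y := by
  have hnum : ∀ k, cfNum x k = cfNum y k ∧ cfDen x k = cfDen y k := by
    intro k
    induction k using Nat.twoStepInduction with
    | zero => simp [cfNum, cfDen, h 0]
    | one => simp [cfNum, cfDen, h 0, h 1]
    | more k ih1 ih2 =>
      show cfDigit x (k + 2) * cfNum x (k + 1) + cfNum x k = cfDigit y (k + 2) * cfNum y (k + 1) + cfNum y k ∧
        cfDigit x (k + 2) * cfDen x (k + 1) + cfDen x k = cfDigit y (k + 2) * cfDen y (k + 1) + cfDen y k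
      rw [h (k+2), ih1.1, ih1.2, ih2.1, ih2.2]
      exact ⟨rfl, rfl⟩
  have key : ∀ k : ℕ, |x - y| ≤ 2 / (k + 1 : ℝ) := by
    intro k
    have h1 := eta_abs_le' hx k
    have h2 := eta_abs_le' hy k
    rw [(hnum k).1, (hnum k).2] at h1
    have hq : (1:ℝ) ≤ (cfDen y k : ℝ) := by exact_mod_cast one_le_cfDen k hy
    have hq0 : (0:ℝ) < (cfDen y k : ℝ) := lt_of_lt_of_le zero_lt_one hq
    have h3 : |(cfDen y k : ℝ) * (x - y)| ≤ 2 / (k + 1 : ℝ) := by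
      have : (cfDen y k : ℝ) * (x - y) =
          ((cfDen y k : ℝ) * x - (cfNum y k : ℝ)) - ((cfDen y k : ℝ) * y - (cfNum y k : ℝ)) := by ring
      rw [this]
      calc |(((cfDen y k : ℝ) * x - (cfNum y k : ℝ)) - ((cfDen y k : ℝ) * y - (cfNum y k : ℝ)))|
          ≤ |(cfDen y k : ℝ) * x - (cfNum y k : ℝ)| + |(cfDen y k : ℝ) * y - (cfNum y k : ℝ)| :=
            abs_sub _ _
        _ ≤ 1 / (k+1 : ℝ) + 1 / (k+1 : ℝ) := add_le_add h1 h2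
        _ = 2 / (k+1 : ℝ) := by ring
    rw [abs_mul, abs_of_pos hq0] at h3
    calc |x - y| = 1 * |x - y| := (one_mul _).symm
      _ ≤ (cfDen y k : ℝ) * |x - y| := by
          apply mul_le_mul_of_nonneg_right hq (abs_nonneg _)
      _ ≤ 2 / (k + 1 : ℝ) := h3
  by_contra hne
  have hpos : 0 < |x - y| := abs_pos.mpr (sub_ne_zero.mpr hne)
  obtain ⟨k, hk⟩ := exists_nat_gt (2 / |x - y|)
  have hk1 : 2 / |x - y| < (k:ℝ) + 1 := lt_trans hk (by linarith)
  have := key k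
  rw [div_lt_iff₀ hpos] at hk1
  rw [le_div_iff₀ (by positivity : (0:ℝ) < (k:ℝ)+1)] at this
  nlinarith

end Unique

section Corr

lemma corr {α : ℝ} (N j : ℕ) :
    cfNum α (N + 2 + j) =
      cfNum α (N+1) * cfNum (cfTail α (N+2)) j + cfNum α N * cfDen (cfTail α (N+2)) j ∧
    cfDen α (N + 2 + j) =
      cfDen α (N+1) * cfNum (cfTail α (N+2)) j + cfDen α N * cfDen (cfTail α (N+2)) j := by
  induction j using Nat.twoStepInduction with
  | zero =>
    constructor
    · show cfNum α (N+2) = _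
      rw [show cfNum α (N+2) = cfDigit α (N + 2) * cfNum α (N + 1) + cfNum α N from rfl]
      rw [show cfNum (cfTail α (N+2)) 0 = cfDigit (cfTail α (N+2)) 0 from rfl,
        show cfDen (cfTail α (N+2)) 0 = 1 from rfl, cfDigit_shift]
      rw [show N + 2 + 0 = N + 2 from rfl]
      ring
    · show cfDen α (N+2) = _
      rw [show cfDen α (N+2) = cfDigit α (N + 2) * cfDen α (N + 1) + cfDen α N from rfl]
      rw [show cfNum (cfTail α (N+2)) 0 = cfDigit (cfTail α (N+2)) 0 from rfl,
        show cfDen (cfTail α (N+2)) 0 = 1 from rfl, cfDigit_shift]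
      rw [show N + 2 + 0 = N + 2 from rfl]
      ring
  | one =>
    have e0 : cfDigit (cfTail α (N+2)) 0 = cfDigit α (N+2) := by rw [cfDigit_shift]
    have e1 : cfDigit (cfTail α (N+2)) 1 = cfDigit α (N+3) := by rw [cfDigit_shift]
    constructor
    · show cfNum α (N+3) = _
      rw [show cfNum α (N+3) = cfDigit α (N + 3) * cfNum α (N + 2) + cfNum α (N+1) from rfl,
        show cfNum α (N+2) = cfDigit α (N + 2) * cfNum α (N + 1) + cfNum α N from rfl,
        show cfNum (cfTail α (N+2)) 1 = cfDigit (cfTail α (N+2)) 1 * cfDigit (cfTail α (N+2)) 0 + 1 from rfl,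
        show cfDen (cfTail α (N+2)) 1 = cfDigit (cfTail α (N+2)) 1 from rfl, e0, e1]
      ring
    · show cfDen α (N+3) = _
      rw [show cfDen α (N+3) = cfDigit α (N + 3) * cfDen α (N + 2) + cfDen α (N+1) from rfl,
        show cfDen α (N+2) = cfDigit α (N + 2) * cfDen α (N + 1) + cfDen α N from rfl,
        show cfNum (cfTail α (N+2)) 1 = cfDigit (cfTail α (N+2)) 1 * cfDigit (cfTail α (N+2)) 0 + 1 from rfl,
        show cfDen (cfTail α (N+2)) 1 = cfDigit (cfTail α (N+2)) 1 from rfl, e0, e1]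
      ring
  | more j ih1 ih2 =>
    have hidx : N + 2 + (j + 2) = (N + 2 + j) + 2 := by omega
    have hidx1 : (N + 2 + j) + 1 = N + 2 + (j+1) := by omega
    have ed : cfDigit (cfTail α (N+2)) (j+2) = cfDigit α ((N + 2 + j) + 2) := by
      rw [cfDigit_shift]; norm_num [Nat.add_assoc]
    constructor
    · rw [hidx,
        show cfNum α ((N+2+j)+2) = cfDigit α ((N+2+j) + 2) * cfNum α ((N+2+j) + 1) + cfNum α (N+2+j) from rfl,
        show cfNum (cfTail α (N+2)) (j+2) = cfDigit (cfTail α (N+2)) (j + 2) * cfNum (cfTail α (N+2)) (j + 1) + cfNum (cfTail α (N+2)) j from rfl,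
        show cfDen (cfTail α (N+2)) (j+2) = cfDigit (cfTail α (N+2)) (j + 2) * cfDen (cfTail α (N+2)) (j + 1) + cfDen (cfTail α (N+2)) j from rfl,
        ed, hidx1, ih2.1, ih1.1]
      ring
    · rw [hidx,
        show cfDen α ((N+2+j)+2) = cfDigit α ((N+2+j) + 2) * cfDen α ((N+2+j) + 1) + cfDen α (N+2+j) from rfl,
        show cfNum (cfTail α (N+2)) (j+2) = cfDigit (cfTail α (N+2)) (j + 2) * cfNum (cfTail α (N+2)) (j + 1) + cfNum (cfTail α (N+2)) j from rfl,
        show cfDen (cfTail α (N+2)) (j+2) = cfDigit (cfTail α (N+2)) (j + 2) * cfDen (cfTail α (N+2)) (j + 1) + cfDen (cfTail α (N+2)) j from rfl,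
        ed, hidx1, ih2.2, ih1.2]
      ring

end Corr
section Psi

variable {α : ℝ}

/-- The defining set of `psi2`. -/
def psiSet (α t : ℝ) : Set ℝ :=
  { x : ℝ | ∃ p q : ℤ, 1 ≤ q ∧ (q : ℝ) ≤ t ∧
    (∀ n : ℕ, (p, q) ≠ (cfNum α n, cfDen α n)) ∧ x = |(q : ℝ) * α - (p : ℝ)| }

lemma psi2_eq (t : ℝ) : psi2 α t = sInf (psiSet α t) := rfl

lemma psiSet_nonneg {t x : ℝ} (hx : x ∈ psiSet α t) : 0 ≤ x := by
  obtain ⟨p, q, _, _, _, rfl⟩ := hx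
  exact abs_nonneg _

lemma psi2_nonneg (t : ℝ) : 0 ≤ psi2 α t :=
  Real.sInf_nonneg fun x hx => psiSet_nonneg hx

lemma psi2_le {t x : ℝ} (hx : x ∈ psiSet α t) : psi2 α t ≤ x :=
  csInf_le ⟨0, fun y hy => psiSet_nonneg hy⟩ hx

lemma valid_pair (hα : Irrational α) (k : ℕ) :
    (cfDigit α 0 + 2, (1:ℤ)) ≠ (cfNum α k, cfDen α k) := by
  intro h
  have h1 : cfDigit α 0 + 2 = cfNum α k := (Prod.mk.injEq _ _ _ _ ▸ h).1
  have h2 : (1:ℤ) = cfDen α k := (Prod.mk.injEq _ _ _ _ ▸ h).2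
  match k with
  | 0 => rw [show cfNum α 0 = cfDigit α 0 from rfl] at h1; omega
  | 1 =>
    have : cfDigit α 1 = 1 := by simpa [cfDen] using h2.symm
    rw [show cfNum α 1 = cfDigit α 1 * cfDigit α 0 + 1 from rfl, this] at h1
    omega
  | (k+2) =>
    have := le_cfDen (k+2) hα
    omega

lemma psiSet_nonempty (hα : Irrational α) {t : ℝ} (ht : 1 ≤ t) :
    (psiSet α t).Nonempty :=
  ⟨|((1:ℤ):ℝ) * α - ((cfDigit α 0 + 2 : ℤ) : ℝ)|,
    cfDigit α 0 + 2, 1, le_refl _, by exact_mod_cast ht, valid_pair hα, rfl⟩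

lemma psi2_ge (hα : Irrational α) {t b : ℝ} (ht : 1 ≤ t)
    (hb : ∀ x ∈ psiSet α t, b ≤ x) : b ≤ psi2 α t :=
  le_csInf (psiSet_nonempty hα ht) hb

lemma not_conv_double (hα : Irrational α) (k j : ℕ) :
    (2 * cfNum α k, 2 * cfDen α k) ≠ (cfNum α j, cfDen α j) := by
  intro h
  have h1 : 2 * cfNum α k = cfNum α j := (Prod.mk.injEq _ _ _ _ ▸ h).1
  have h2 : 2 * cfDen α k = cfDen α j := (Prod.mk.injEq _ _ _ _ ▸ h).2
  match j with
  | 0 =>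
    have := one_le_cfDen k hα
    rw [show cfDen α 0 = 1 from rfl] at h2
    omega
  | (j+1) =>
    have := det_id (α := α) j
    have e1 := one_le_cfDen k hα
    have hdet : cfNum α (j+1) * cfDen α j - cfNum α j * cfDen α (j+1) = (-1)^j := det_id j
    have hpm : ((-1:ℤ))^j = 1 ∨ ((-1:ℤ))^j = -1 := by
      rcases Nat.even_or_odd j with hj | hj
      · exact Or.inl (Even.neg_one_pow hj)
      · exact Or.inr (Odd.neg_one_pow hj)
    rcases hpm with hp | hp <;> rw [hp, ← h1, ← h2] at hdet
    · have h3 : 2 * (cfNum α k * cfDen α j - cfNum α j * cfDen α k) = 1 := by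
        linear_combination hdet
      omega
    · have h3 : 2 * (cfNum α k * cfDen α j - cfNum α j * cfDen α k) = -1 := by
        linear_combination hdet
      omega

lemma psi2_le_eta (hα : Irrational α) {t : ℝ} (k : ℕ)
    (ht : 2 * (cfDen α k : ℝ) ≤ t) :
    psi2 α t ≤ 2 * |(cfDen α k : ℝ) * α - (cfNum α k : ℝ)| := by
  apply psi2_le
  refine ⟨2 * cfNum α k, 2 * cfDen α k, ?_, by push_cast; linarith,
    not_conv_double hα k, ?_⟩
  · have := one_le_cfDen k hα; omega
  · push_cast
    rw [show ((2:ℝ) * (cfDen α k:ℝ)) * α - 2 * (cfNum α k:ℝ) =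
        2 * ((cfDen α k:ℝ) * α - (cfNum α k:ℝ)) by ring, abs_mul]
    norm_num

lemma psi2_tendsto (hα : Irrational α) :
    Filter.Tendsto (psi2 α) Filter.atTop (nhds 0) := by
  rw [Metric.tendsto_atTop]
  intro ε hε
  obtain ⟨k, hk⟩ := exists_nat_gt (2 / ε)
  refine ⟨2 * (cfDen α k : ℝ), fun t ht => ?_⟩
  have h1 : psi2 α t ≤ 2 * |(cfDen α k : ℝ) * α - (cfNum α k : ℝ)| :=
    psi2_le_eta hα k ht
  have h2 := eta_abs_le' hα k
  have h3 : psi2 α t ≤ 2 / ((k:ℝ) + 1) := by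
    rw [div_eq_mul_one_div]
    nlinarith
  have h4 : 2 / ((k:ℝ) + 1) < ε := by
    rw [div_lt_iff₀ (by positivity)]
    rw [div_lt_iff₀ hε] at hk
    nlinarith
  rw [Real.dist_eq, sub_zero, abs_of_nonneg (psi2_nonneg t)]
  linarith

lemma freq_le_four (hα : Irrational α) :
    ∃ᶠ t in Filter.atTop, t * psi2 α t ≤ 4 := by
  rw [Filter.frequently_atTop]
  intro b
  obtain ⟨k, hk⟩ := exists_nat_ge b
  have hqk : (k:ℝ) ≤ (cfDen α k : ℝ) := by exact_mod_cast le_cfDen k hα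
  have hq1 : (1:ℝ) ≤ (cfDen α k : ℝ) := by exact_mod_cast one_le_cfDen k hα
  refine ⟨2 * (cfDen α k : ℝ), by linarith, ?_⟩
  have h1 : psi2 α (2 * (cfDen α k : ℝ)) ≤ 2 * |(cfDen α k : ℝ) * α - (cfNum α k : ℝ)| :=
    psi2_le_eta hα k (le_refl _)
  have h2 := eta_abs_le hα k
  have hmono : (cfDen α k : ℝ) ≤ (cfDen α (k+1) : ℝ) := by exact_mod_cast cfDen_mono k hα
  have hq1' : (1:ℝ) ≤ (cfDen α (k+1) : ℝ) := by exact_mod_cast one_le_cfDen (k+1) hα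
  have hinv : ((cfDen α (k+1) : ℝ))⁻¹ * (cfDen α k : ℝ) ≤ 1 := by
    rw [← div_eq_inv_mul, div_le_one (by linarith)]
    exact hmono
  have hpsin := psi2_nonneg (α := α) (2 * (cfDen α k : ℝ))
  nlinarith [abs_nonneg ((cfDen α k : ℝ) * α - (cfNum α k : ℝ))]

end Psi
section Key

open Filter

set_option maxHeartbeats 2000000 in
lemma kConst_le_aux {α β : ℝ} (hα : Irrational α) (hβ : Irrational β) (nn mm : ℕ)
    (hd : ∀ k : ℕ, 0 < k → cfDigit α (nn + 1 + k) = cfDigit β (mm + 1 + k)) :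
    kConst α ≤ kConst β := by
  -- the common tail
  have hττ : cfTail β (mm+2) = cfTail α (nn+2) := by
    apply cf_unique (irrational_cfTail hβ _) (irrational_cfTail hα _)
    intro k
    rw [cfDigit_shift, cfDigit_shift]
    have := (hd (k+1) (by omega)).symm
    convert this using 2 <;> omega
  set τ : ℝ := cfTail α (nn+2) with hτdef
  have hτ1 : 1 < τ := one_lt_cfTail_succ hα (nn+1)
  -- abbreviations
  set pa : ℤ := cfNum α (nn+1) with hpa
  set pa' : ℤ := cfNum α nn with hpa'
  set qa : ℤ := cfDen α (nn+1) with hqa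
  set qa' : ℤ := cfDen α nn with hqa'
  set Pb : ℤ := cfNum β (mm+1) with hPb
  set Pb' : ℤ := cfNum β mm with hPb'
  set Qb : ℤ := cfDen β (mm+1) with hQb
  set Qb' : ℤ := cfDen β mm with hQb'
  have hqa1 : 1 ≤ qa := one_le_cfDen _ hα
  have hqa'1 : 1 ≤ qa' := one_le_cfDen _ hα
  have hQb1 : 1 ≤ Qb := one_le_cfDen _ hβ
  have hQb'1 : 1 ≤ Qb' := one_le_cfDen _ hβ
  set Dα : ℝ := (qa:ℝ) * τ + (qa':ℝ) with hDαdef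
  set Dβ : ℝ := (Qb:ℝ) * τ + (Qb':ℝ) with hDβdef
  have hDα : 0 < Dα := by
    rw [hDαdef]
    have : (1:ℝ) ≤ (qa:ℝ) := by exact_mod_cast hqa1
    have : (1:ℝ) ≤ (qa':ℝ) := by exact_mod_cast hqa'1
    nlinarith
  have hDβ : 0 < Dβ := by
    rw [hDβdef]
    have : (1:ℝ) ≤ (Qb:ℝ) := by exact_mod_cast hQb1
    have : (1:ℝ) ≤ (Qb':ℝ) := by exact_mod_cast hQb'1
    nlinarith
  have idA : α * Dα = (pa:ℝ) * τ + (pa':ℝ) := main_id hα nn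
  have idB : β * Dβ = (Pb:ℝ) * τ + (Pb':ℝ) := by
    have := main_id hβ mm
    rw [hττ] at this
    exact this
  set σa : ℤ := pa * qa' - pa' * qa with hσadef
  set σb : ℤ := Pb * Qb' - Pb' * Qb with hσbdef
  have hσaval : σa = (-1)^nn := by
    have h := det_id (α := α) nn
    rw [← hpa, ← hpa', ← hqa, ← hqa'] at h
    rw [hσadef]
    exact h
  have hσbval : σb = (-1)^mm := by
    have h := det_id (α := β) mm
    rw [← hPb, ← hPb', ← hQb, ← hQb'] at h
    rw [hσbdef]
    exact h
  have hσa2 : σa * σa = 1 := by rw [hσaval, ← pow_add]; exact Even.neg_one_pow ⟨nn, rfl⟩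
  have hσb2 : σb * σb = 1 := by rw [hσbval, ← pow_add]; exact Even.neg_one_pow ⟨mm, rfl⟩
  have hσa1 : σa = 1 ∨ σa = -1 := by
    rcases Nat.even_or_odd nn with h | h
    · left; rw [hσaval]; exact Even.neg_one_pow h
    · right; rw [hσaval]; exact Odd.neg_one_pow h
  have hσb1 : σb = 1 ∨ σb = -1 := by
    rcases Nat.even_or_odd mm with h | h
    · left; rw [hσbval]; exact Even.neg_one_pow h
    · right; rw [hσbval]; exact Odd.neg_one_pow h
  have habsσa : |(σa:ℝ)| = 1 := by rcases hσa1 with h | h <;> rw [h] <;> norm_num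
  have habsσb : |(σb:ℝ)| = 1 := by rcases hσb1 with h | h <;> rw [h] <;> norm_num
  -- generic transfer identities
  have idA' : ∀ x y : ℤ, ((y:ℝ) * α - (x:ℝ)) * Dα =
      ((y * pa - x * qa : ℤ) : ℝ) * τ + ((y * pa' - x * qa' : ℤ) : ℝ) := by
    intro x y
    push_cast
    rw [hDαdef] at idA ⊢
    linear_combination (y:ℝ) * idA
  have idB' : ∀ x y : ℤ, ((y:ℝ) * β - (x:ℝ)) * Dβ =
      ((y * Pb - x * Qb : ℤ) : ℝ) * τ + ((y * Pb' - x * Qb' : ℤ) : ℝ) := by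
    intro x y
    push_cast
    rw [hDβdef] at idB ⊢
    linear_combination (y:ℝ) * idB
  -- minimal error of initial convergents of α
  obtain ⟨k₀, hk₀mem, hk₀min⟩ := Finset.exists_min_image (Finset.range (nn+2))
    (fun k => |(cfDen α k : ℝ) * α - (cfNum α k : ℝ)|) ⟨0, by simp⟩
  set δ₀ : ℝ := |(cfDen α k₀ : ℝ) * α - (cfNum α k₀ : ℝ)| with hδ₀def
  have hδ₀pos : 0 < δ₀ := eta_pos hα k₀
  -- constants
  set κ : ℝ := Dβ / Dα with hκdef
  have hκ : 0 < κ := div_pos hDβ hDα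
  set E : ℤ := Qb * qa' - Qb' * qa with hEdef
  set δ : ℝ := min (min (δ₀ / κ) (1 / (2 * κ))) 1 with hδdef
  have hδpos : 0 < δ := by
    apply lt_min (lt_min (div_pos hδ₀pos hκ) (by positivity)) one_pos
  have hδ1 : δ ≤ 1 := min_le_right _ _
  have hκδ₀ : κ * δ ≤ δ₀ := by
    have h1 : δ ≤ δ₀ / κ := le_trans (min_le_left _ _) (min_le_left _ _)
    rw [le_div_iff₀ hκ] at h1
    linarith
  have hκδhalf : κ * δ ≤ 1/2 := by
    have h1 : δ ≤ 1 / (2 * κ) := le_trans (min_le_left _ _) (min_le_right _ _)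
    rw [le_div_iff₀ (by positivity)] at h1
    linarith
  set c₀ : ℝ := |(E:ℝ)| + 1 with hc₀def
  set u : ℝ → ℝ := fun t => t / κ + c₀ with hudef
  have hu : Tendsto u atTop atTop := by
    apply tendsto_atTop_add_const_right
    exact tendsto_id.atTop_div_const hκ

  -- the main eventual inequality
  have hev : ∀ᶠ t in atTop, κ⁻¹ * psi2 α (u t) ≤ psi2 β t := by
    have hsmall : ∀ᶠ t in atTop, psi2 α (u t) < κ * δ :=
      Filter.Tendsto.eventually_lt_const (by positivity) ((psi2_tendsto hα).comp hu)
    filter_upwards [eventually_ge_atTop (1:ℝ), hsmall] with t ht1 hsm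
    apply psi2_ge hβ ht1
    rintro x ⟨p, q, hq1, hqt, hnc, rfl⟩
    by_cases hxd : δ ≤ |(q:ℝ) * β - (p:ℝ)|
    · have h1 : κ⁻¹ * psi2 α (u t) ≤ κ⁻¹ * (κ * δ) :=
        mul_le_mul_of_nonneg_left (le_of_lt hsm) (by positivity)
      have h2 : κ⁻¹ * (κ * δ) = δ := by field_simp
      linarith
    push_neg at hxd
    set u' : ℤ := q * Pb - p * Qb with hu'def
    set v' : ℤ := q * Pb' - p * Qb' with hv'def
    have keyB : ((q:ℝ) * β - (p:ℝ)) * Dβ = (u' : ℝ) * τ + (v' : ℝ) := idB' p q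
    set pt : ℤ := σa * (u' * pa' - v' * pa) with hptdef
    set qt : ℤ := σa * (u' * qa' - v' * qa) with hqtdef
    have hσaup : qa' * pa - pa' * qa = σa := by rw [hσadef]; ring
    have hrel1 : qt * pa - pt * qa = u' := by
      rw [hqtdef, hptdef]
      linear_combination (σa * u') * hσaup + u' * hσa2
    have hrel2 : qt * pa' - pt * qa' = v' := by
      rw [hqtdef, hptdef]
      linear_combination (σa * v') * hσaup + v' * hσa2
    have keyA : ((qt:ℝ) * α - (pt:ℝ)) * Dα = (u' : ℝ) * τ + (v' : ℝ) := by
      have h := idA' pt qt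
      rw [hrel1, hrel2] at h
      exact h
    have errEq : ((qt:ℝ) * α - (pt:ℝ)) * Dα = ((q:ℝ) * β - (p:ℝ)) * Dβ :=
      keyA.trans keyB.symm
    have errκ : ((qt:ℝ) * α - (pt:ℝ)) = κ * ((q:ℝ) * β - (p:ℝ)) := by
      rw [hκdef]
      field_simp
      linear_combination errEq
    have errAbs : |(qt:ℝ) * α - (pt:ℝ)| = κ * |(q:ℝ) * β - (p:ℝ)| := by
      rw [errκ, abs_mul, abs_of_pos hκ]
    have herrsmall : κ * |(q:ℝ) * β - (p:ℝ)| < κ * δ := by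
      exact mul_lt_mul_of_pos_left hxd hκ
    have hqt0 : qt ≠ 0 := by
      intro h0
      have habs0 : |(qt:ℝ) * α - (pt:ℝ)| = |(pt:ℝ)| := by
        rw [h0]
        push_cast
        rw [show (0:ℝ) * α - (pt:ℝ) = -(pt:ℝ) by ring, abs_neg]
      have h1 : |(pt:ℝ)| < 1 := by
        rw [habs0] at errAbs
        linarith
      have hpt0 : pt = 0 := by
        have h2 : |pt| < 1 := by exact_mod_cast h1
        have h3 := abs_lt.mp h2
        omega
      have hu'0 : u' = 0 := by rw [← hrel1, h0, hpt0]; ring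
      have hv'0 : v' = 0 := by rw [← hrel2, h0, hpt0]; ring
      have hinv : σb * q = u' * Qb' - v' * Qb := by rw [hu'def, hv'def, hσbdef]; ring
      rw [hu'0, hv'0] at hinv
      rcases hσb1 with h | h <;> rw [h] at hinv <;> omega
    set sg : ℤ := if 0 < qt then 1 else -1 with hsgdef
    have hsg1 : sg = 1 ∨ sg = -1 := by rw [hsgdef]; split_ifs <;> simp
    have hsgqt : 1 ≤ sg * qt := by
      rw [hsgdef]; split_ifs with h
      · omega
      · have : qt < 0 := lt_of_le_of_ne (not_lt.mp h) hqt0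
        omega
    have habssg : |(sg:ℝ)| = 1 := by rcases hsg1 with h | h <;> rw [h] <;> norm_num
    have hsgabs : sg * qt = |qt| := by
      rw [hsgdef]; split_ifs with h
      · rw [abs_of_pos h]; ring
      · have hlt : qt < 0 := lt_of_le_of_ne (not_lt.mp h) hqt0
        rw [abs_of_neg hlt]; ring
    -- size bound for qt
    have hqtD : (qt:ℝ) * Dβ = (σa:ℝ) * (σb:ℝ) * (q:ℝ) * Dα
        + (σa:ℝ) * (E:ℝ) * (((q:ℝ) * β - (p:ℝ)) * Dβ) := by
      rw [keyB, hqtdef, hu'def, hv'def, hσbdef, hEdef, hDαdef, hDβdef]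
      push_cast
      ring
    have habsqt : |(qt:ℝ)| * Dβ ≤ (q:ℝ) * Dα + |(E:ℝ)| * (|(q:ℝ) * β - (p:ℝ)| * Dβ) := by
      have hq0 : (0:ℝ) ≤ (q:ℝ) := by exact_mod_cast le_trans zero_le_one hq1
      calc |(qt:ℝ)| * Dβ = |(qt:ℝ) * Dβ| := by rw [abs_mul, abs_of_pos hDβ]
        _ = |(σa:ℝ) * (σb:ℝ) * (q:ℝ) * Dα + (σa:ℝ) * (E:ℝ) * (((q:ℝ) * β - (p:ℝ)) * Dβ)| := by
            rw [hqtD]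
        _ ≤ |(σa:ℝ) * (σb:ℝ) * (q:ℝ) * Dα| + |(σa:ℝ) * (E:ℝ) * (((q:ℝ) * β - (p:ℝ)) * Dβ)| :=
            abs_add_le _ _
        _ = (q:ℝ) * Dα + |(E:ℝ)| * (|(q:ℝ) * β - (p:ℝ)| * Dβ) := by
            simp only [abs_mul, habsσa, habsσb, abs_of_nonneg hq0, abs_of_pos hDα,
              abs_of_pos hDβ]
            ring
    have hDβκ : Dβ / κ = Dα := by rw [hκdef]; field_simp
    have hqtle : |(qt:ℝ)| ≤ t / κ + |(E:ℝ)| := by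
      have h1 : |(qt:ℝ)| * Dβ ≤ (t / κ + |(E:ℝ)|) * Dβ := by
        have h2 : (t / κ + |(E:ℝ)|) * Dβ = t * Dα + |(E:ℝ)| * Dβ := by
          rw [show (t / κ + |(E:ℝ)|) * Dβ = t * (Dβ / κ) + |(E:ℝ)| * Dβ by ring, hDβκ]
        rw [h2]
        have h3 : (q:ℝ) * Dα ≤ t * Dα := mul_le_mul_of_nonneg_right hqt (le_of_lt hDα)
        have h4 : |(E:ℝ)| * (|(q:ℝ) * β - (p:ℝ)| * Dβ) ≤ |(E:ℝ)| * Dβ := by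
          have h5 : |(q:ℝ) * β - (p:ℝ)| * Dβ ≤ 1 * Dβ :=
            mul_le_mul_of_nonneg_right (le_of_lt (lt_of_lt_of_le hxd hδ1)) (le_of_lt hDβ)
          have h6 : (0:ℝ) ≤ |(E:ℝ)| := abs_nonneg _
          nlinarith
        linarith
      exact le_of_mul_le_mul_right h1 hDβ
    have hle : ((sg * qt : ℤ) : ℝ) ≤ u t := by
      rw [hsgabs]
      rw [hudef, hc₀def]
      push_cast
      calc |(qt:ℝ)| ≤ t / κ + |(E:ℝ)| := hqtle
        _ ≤ t / κ + (|(E:ℝ)| + 1) := by linarith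
    -- non-convergence of the transferred pair
    have hnc' : ∀ k : ℕ, (sg * pt, sg * qt) ≠ (cfNum α k, cfDen α k) := by
      intro k hk
      rw [Prod.mk.injEq] at hk
      obtain ⟨hkp, hkq⟩ := hk
      by_cases hkn : k < nn + 2
      · have hmin := hk₀min k (Finset.mem_range.mpr hkn)
        have heq : |(cfDen α k : ℝ) * α - (cfNum α k : ℝ)| = κ * |(q:ℝ) * β - (p:ℝ)| := by
          rw [← hkp, ← hkq]
          push_cast
          rw [show ((sg:ℝ) * (qt:ℝ)) * α - (sg:ℝ) * (pt:ℝ)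
              = (sg:ℝ) * ((qt:ℝ) * α - (pt:ℝ)) by ring, abs_mul, habssg, one_mul, errAbs]
        rw [heq] at hmin
        linarith
      · push_neg at hkn
        obtain ⟨j, rfl⟩ : ∃ j, k = nn + 2 + j := ⟨k - (nn+2), by omega⟩
        have hcorrα := corr (α := α) nn j
        rw [← hτdef, ← hpa, ← hpa', ← hqa, ← hqa'] at hcorrα
        have hcorrβ := corr (α := β) mm j
        rw [hττ, ← hPb, ← hPb', ← hQb, ← hQb'] at hcorrβ
        set rj : ℤ := cfNum τ j with hrjdef
        set sj : ℤ := cfDen τ j with hsjdef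
        have e1 : sg * u' = sj * σa := by
          calc sg * u' = (sg * qt) * pa - (sg * pt) * qa := by rw [← hrel1]; ring
            _ = cfDen α (nn+2+j) * pa - cfNum α (nn+2+j) * qa := by rw [hkp, hkq]
            _ = sj * σa := by rw [hcorrα.1, hcorrα.2, hσadef]; ring
        have e2 : sg * v' = -(rj * σa) := by
          calc sg * v' = (sg * qt) * pa' - (sg * pt) * qa' := by rw [← hrel2]; ring
            _ = cfDen α (nn+2+j) * pa' - cfNum α (nn+2+j) * qa' := by rw [hkp, hkq]
            _ = -(rj * σa) := by rw [hcorrα.1, hcorrα.2, hσadef]; ring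
        have hq' : σb * q = u' * Qb' - v' * Qb := by rw [hu'def, hv'def, hσbdef]; ring
        have hp' : σb * p = u' * Pb' - v' * Pb := by rw [hu'def, hv'def, hσbdef]; ring
        have hq2 : sg * σb * q = σa * cfDen β (mm+2+j) := by
          calc sg * σb * q = sg * (u' * Qb' - v' * Qb) := by rw [← hq']; ring
            _ = (sg * u') * Qb' - (sg * v') * Qb := by ring
            _ = (sj * σa) * Qb' - (-(rj * σa)) * Qb := by rw [e1, e2]
            _ = σa * cfDen β (mm+2+j) := by rw [hcorrβ.2]; ring
        have hp2 : sg * σb * p = σa * cfNum β (mm+2+j) := by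
          calc sg * σb * p = sg * (u' * Pb' - v' * Pb) := by rw [← hp']; ring
            _ = (sg * u') * Pb' - (sg * v') * Pb := by ring
            _ = (sj * σa) * Pb' - (-(rj * σa)) * Pb := by rw [e1, e2]
            _ = σa * cfNum β (mm+2+j) := by rw [hcorrβ.1]; ring
        have hden1 : 1 ≤ cfDen β (mm+2+j) := one_le_cfDen _ hβ
        rcases hsg1 with h1 | h1 <;> rcases hσa1 with h2 | h2 <;> rcases hσb1 with h3 | h3 <;>
          rw [h1, h2, h3] at hq2 hp2 <;>
          exact hnc (mm+2+j) (by
            have hq3 : q = cfDen β (mm+2+j) := by omega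
            have hp3 : p = cfNum β (mm+2+j) := by omega
            rw [hp3, hq3])
    -- conclude
    have hmem : |((sg * qt : ℤ) : ℝ) * α - ((sg * pt : ℤ) : ℝ)| ∈ psiSet α (u t) :=
      ⟨sg * pt, sg * qt, hsgqt, hle, hnc', rfl⟩
    have hψ := psi2_le hmem
    have hx' : |((sg * qt : ℤ) : ℝ) * α - ((sg * pt : ℤ) : ℝ)| = κ * |(q:ℝ) * β - (p:ℝ)| := by
      push_cast
      rw [show ((sg:ℝ) * (qt:ℝ)) * α - (sg:ℝ) * (pt:ℝ)
          = (sg:ℝ) * ((qt:ℝ) * α - (pt:ℝ)) by ring, abs_mul, habssg, one_mul, errAbs]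
    rw [hx'] at hψ
    calc κ⁻¹ * psi2 α (u t) ≤ κ⁻¹ * (κ * |(q:ℝ) * β - (p:ℝ)|) :=
        mul_le_mul_of_nonneg_left hψ (by positivity)
      _ = |(q:ℝ) * β - (p:ℝ)| := by field_simp
  -- liminf comparison
  have hcobβ : IsCoboundedUnder (· ≥ ·) atTop (fun t : ℝ => t * psi2 β t) :=
    Filter.IsCoboundedUnder.of_frequently_le (freq_le_four hβ)
  have hbddα : IsBoundedUnder (· ≥ ·) atTop (fun t : ℝ => t * psi2 α t) := by
    refine ⟨0, ?_⟩
    rw [eventually_map]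
    filter_upwards [eventually_ge_atTop (0:ℝ)] with t ht
    exact mul_nonneg ht (psi2_nonneg t)
  have main : ∀ c : ℝ, c < kConst α → c ≤ kConst β := by
    intro c hc
    set c' : ℝ := (c + kConst α) / 2 with hc'def
    have hc1 : c < c' := by rw [hc'def]; linarith
    have hc2 : c' < kConst α := by rw [hc'def]; linarith
    have h1 : ∀ᶠ t in atTop, c' < (u t) * psi2 α (u t) :=
      hu.eventually (Filter.eventually_lt_of_lt_liminf hc2 hbddα)
    have h2 : ∀ᶠ t in atTop, c₀ * psi2 α (u t) < c' - c := by
      have htnd : Tendsto (fun t => c₀ * psi2 α (u t)) atTop (nhds 0) := by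
        have := ((psi2_tendsto hα).comp hu).const_mul c₀
        simpa [Function.comp] using this
      exact Filter.Tendsto.eventually_lt_const (by linarith) htnd
    have h3 : ∀ᶠ t in atTop, c ≤ t * psi2 β t := by
      filter_upwards [hev, h1, h2, eventually_ge_atTop (0:ℝ)] with t htev ht1 ht2 ht0
      have h4 : t * (κ⁻¹ * psi2 α (u t)) ≤ t * psi2 β t :=
        mul_le_mul_of_nonneg_left htev ht0
      have h5 : u t = t / κ + c₀ := rfl
      have h6 : t * (κ⁻¹ * psi2 α (u t)) = (u t) * psi2 α (u t) - c₀ * psi2 α (u t) := by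
        rw [h5, div_eq_mul_inv]
        ring
      have h7 : c < t * (κ⁻¹ * psi2 α (u t)) := by rw [h6]; linarith
      linarith
    exact Filter.le_liminf_of_le hcobβ h3
  by_contra hlt
  push_neg at hlt
  have := main ((kConst β + kConst α) / 2) (by linarith)
  linarith

end Key
/-- Equivalent irrational numbers have the same Diophantine constant `𝔨`. -/
theorem stmt_10 (α β : ℝ) (hα : Irrational α) (hβ : Irrational β)
    (h : CFEquiv α β) : kConst α = kConst β := by
  obtain ⟨n, m, hn, hm, hdig⟩ := h
  obtain ⟨nn, rfl⟩ : ∃ nn, n = nn + 1 := ⟨n - 1, (Nat.succ_pred_eq_of_pos hn).symm⟩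
  obtain ⟨mm, rfl⟩ : ∃ mm, m = mm + 1 := ⟨m - 1, (Nat.succ_pred_eq_of_pos hm).symm⟩
  exact le_antisymm
    (kConst_le_aux hα hβ nn mm fun k hk => hdig k hk)
    (kConst_le_aux hβ hα mm nn fun k hk => (hdig k hk).symm)
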